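/- J(x) + x/(1-xq) · J(xq) = H(xq), where J and H are the q-series J(x) = Σ_{n≥0} (-x)^n q^{C(n,2)} / ((q;q)_n (xq;q)_n) and H(x) = Σ_{n≥0} (-x)^n q^{C(n,2)} / ((q;q)_n (x;q)_n). -/

import Mathlib

open PowerSeries

noncomputable section
namespace FC

/-- The field `ℚ(q)` of rational functions in `q`. -/
abbrev K : Type := RatFunc ℚ

/-- The variable `q`. -/
def q : K := RatFunc.X

/-- The q-Pochhammer symbol `(a; q)_n = ∏_{i=0}^{n-1} (1 - a q^i)`. -/
def poch (a : K) (n : ℕ) : K := ∏ i ∈ Finset.range n, (1 - a * q ^ i)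

/-- The power series `(x q^s; q)_n = ∏_{i=0}^{n-1} (1 - q^{s+i} x)` in the variable `x`. -/
def pochX (s n : ℕ) : PowerSeries K :=
  ∏ i ∈ Finset.range n, (1 - PowerSeries.C (q ^ (s + i)) * PowerSeries.X)

/-- `J(x) = Σ_{n≥0} (-x)^n q^{C(n,2)} / ((q;q)_n (xq;q)_n)`, defined coefficientwise:
the coefficient of `x^N` is `Σ_{n=0}^{N} (-1)^n q^{C(n,2)}/(q;q)_n · [x^{N-n}] (xq;q)_n⁻¹`. -/
def J : PowerSeries K :=
  PowerSeries.mk fun N => ∑ n ∈ Finset.range (N + 1),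
    ((-1 : K) ^ n * q ^ n.choose 2 / poch q n) * PowerSeries.coeff (N - n) (pochX 1 n)⁻¹

/-- `H(x) = Σ_{n≥0} (-x)^n q^{C(n,2)} / ((q;q)_n (x;q)_n)`. -/
def H : PowerSeries K :=
  PowerSeries.mk fun N => ∑ n ∈ Finset.range (N + 1),
    ((-1 : K) ^ n * q ^ n.choose 2 / poch q n) * PowerSeries.coeff (N - n) (pochX 0 n)⁻¹

/-- `K(x) = Σ_{n≥0} (x^n q^{n(n+1)/2} / (xq;q)_n) · Σ_{k=0}^n (-1)^k/(q;q)_k`. -/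
def Kq : PowerSeries K :=
  PowerSeries.mk fun N => ∑ n ∈ Finset.range (N + 1),
    (q ^ (n * (n + 1) / 2) * ∑ k ∈ Finset.range (n + 1), (-1 : K) ^ k / poch q k) *
      PowerSeries.coeff (N - n) (pochX 1 n)⁻¹

lemma q_pow_ne_one (n : ℕ) : q ^ (n + 1) ≠ 1 := by
  intro hq
  have h : (algebraMap (Polynomial ℚ) K) (Polynomial.X ^ (n + 1)) = q ^ (n + 1) := by
    simp [q, map_pow, RatFunc.algebraMap_X]
  have h2 : (Polynomial.X : Polynomial ℚ) ^ (n + 1) = 1 :=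
    IsFractionRing.injective (Polynomial ℚ) K (by rw [h, hq, map_one])
  have := congrArg Polynomial.natDegree h2
  simp [Polynomial.natDegree_X_pow] at this

lemma poch_ne_zero (n : ℕ) : poch q n ≠ 0 := by
  unfold poch
  apply Finset.prod_ne_zero_iff.mpr
  intro i _
  have : q * q ^ i = q ^ (i + 1) := (pow_succ' q i).symm
  rw [this]
  intro h
  exact q_pow_ne_one i (sub_eq_zero.mp h).symm

lemma constantCoeff_pochX (s n : ℕ) : constantCoeff (pochX s n) = 1 := by
  unfold pochX
  rw [map_prod]
  simp

/-- Formal sum of a family of power series, truncated coefficientwise. -/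
def S (f : ℕ → PowerSeries K) : PowerSeries K :=
  PowerSeries.mk fun N => ∑ n ∈ Finset.range (N + 1), PowerSeries.coeff N (f n)

lemma coeff_S (f : ℕ → PowerSeries K) (N : ℕ) :
    PowerSeries.coeff N (S f) = ∑ n ∈ Finset.range (N + 1), PowerSeries.coeff N (f n) :=
  coeff_mk _ _

lemma S_add (f g : ℕ → PowerSeries K) : S f + S g = S fun n => f n + g n := by
  ext N
  simp [coeff_S, Finset.sum_add_distrib]

lemma S_congr {f g : ℕ → PowerSeries K} (h : ∀ n, f n = g n) : S f = S g := by
  ext N; simp [coeff_S, h]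

lemma rescale_S (f : ℕ → PowerSeries K) :
    rescale q (S f) = S fun n => rescale q (f n) := by
  ext N
  simp [coeff_S, coeff_rescale, Finset.mul_sum]

lemma mul_S (g : PowerSeries K) (f : ℕ → PowerSeries K)
    (hf : ∀ n m, m < n → PowerSeries.coeff m (f n) = 0) :
    g * S f = S fun n => g * f n := by
  ext N
  rw [coeff_mul, coeff_S]
  have step : ∀ p ∈ Finset.HasAntidiagonal.antidiagonal N,
      PowerSeries.coeff p.1 g * PowerSeries.coeff p.2 (S f)
        = ∑ n ∈ Finset.range (N + 1),
            PowerSeries.coeff p.1 g * PowerSeries.coeff p.2 (f n) := by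
    intro p hp
    have hp2 : p.2 ≤ N := by
      have := Finset.HasAntidiagonal.mem_antidiagonal.mp hp
      omega
    rw [coeff_S, Finset.mul_sum]
    apply Finset.sum_subset
    · intro x hx
      simp only [Finset.mem_range] at hx ⊢
      omega
    · intro x _ hx
      simp only [Finset.mem_range] at hx
      rw [hf x p.2 (by omega), mul_zero]
  rw [Finset.sum_congr rfl step, Finset.sum_comm]
  exact Finset.sum_congr rfl fun n _ => (coeff_mul N g (f n)).symm

lemma S_shift (f : ℕ → PowerSeries K) (hf : ∀ n m, m ≤ n → PowerSeries.coeff m (f n) = 0) :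
    S f = S fun n => Nat.rec 0 (fun m _ => f m) n := by
  ext N
  rw [coeff_S, coeff_S, Finset.sum_range_succ, hf N N le_rfl, add_zero,
    Finset.sum_range_succ']
  simp

lemma coeff_term (a : K) (P : PowerSeries K) {n m : ℕ} (h : m < n) :
    PowerSeries.coeff m (PowerSeries.C a * PowerSeries.X ^ n * P) = 0 := by
  rw [mul_comm (PowerSeries.C a) (PowerSeries.X ^ n), mul_assoc, coeff_X_pow_mul',
    if_neg (by omega)]

lemma coeff_term' (a : K) (P : PowerSeries K) {n m : ℕ} (h : n ≤ m) :
    PowerSeries.coeff m (PowerSeries.C a * PowerSeries.X ^ n * P)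
      = a * PowerSeries.coeff (m - n) P := by
  rw [mul_comm (PowerSeries.C a) (PowerSeries.X ^ n), mul_assoc, coeff_X_pow_mul',
    if_pos h, coeff_C_mul]

lemma pochX_succ (s n : ℕ) :
    pochX s (n + 1) = (1 - PowerSeries.C (q ^ s) * PowerSeries.X) * pochX (s + 1) n := by
  unfold pochX
  rw [Finset.prod_range_succ']
  rw [mul_comm, add_zero]
  congr 1
  exact Finset.prod_congr rfl fun i _ => by rw [show s + (i + 1) = s + 1 + i by omega]

lemma rescale_pochX (s n : ℕ) : rescale q (pochX s n) = pochX (s + 1) n := by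
  unfold pochX
  rw [map_prod]
  apply Finset.prod_congr rfl
  intro i _
  rw [map_sub, map_one, map_mul, rescale_X]
  have hC : rescale q (PowerSeries.C (q ^ (s + i))) = PowerSeries.C (q ^ (s + i)) := by
    ext m
    simp only [coeff_rescale, PowerSeries.coeff_C]
    split_ifs with h
    · rw [h, pow_zero, one_mul]
    · rw [mul_zero]
  rw [hC, ← mul_assoc, ← map_mul, ← pow_succ, show s + i + 1 = s + 1 + i from by omega]

lemma rescale_inv (f : PowerSeries K) (h : constantCoeff f ≠ 0) :
    rescale q f⁻¹ = (rescale q f)⁻¹ := by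
  have hc : constantCoeff (rescale q f) ≠ 0 := by
    rw [← coeff_zero_eq_constantCoeff, coeff_rescale, pow_zero, one_mul,
      coeff_zero_eq_constantCoeff]
    exact h
  rw [PowerSeries.eq_inv_iff_mul_eq_one hc, ← map_mul, PowerSeries.inv_mul_cancel f h, map_one]
def c (n : ℕ) : K := (-1 : K) ^ n * q ^ n.choose 2 / poch q n

lemma J_eq : J = S fun n => PowerSeries.C (c n) * PowerSeries.X ^ n * (pochX 1 n)⁻¹ := by
  ext N
  rw [J, coeff_mk, coeff_S]
  refine Finset.sum_congr rfl fun n hn => ?_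
  rw [coeff_term' _ _ (by simpa [Nat.lt_succ_iff] using Finset.mem_range.mp hn)]
  rfl

lemma H_eq : H = S fun n => PowerSeries.C (c n) * PowerSeries.X ^ n * (pochX 0 n)⁻¹ := by
  ext N
  rw [H, coeff_mk, coeff_S]
  refine Finset.sum_congr rfl fun n hn => ?_
  rw [coeff_term' _ _ (by simpa [Nat.lt_succ_iff] using Finset.mem_range.mp hn)]
  rfl

lemma rescale_pochX_inv (s n : ℕ) : rescale q (pochX s n)⁻¹ = (pochX (s + 1) n)⁻¹ := by
  rw [rescale_inv _ (by rw [constantCoeff_pochX]; exact one_ne_zero), rescale_pochX]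

lemma rescale_term (a : K) (s n : ℕ) :
    rescale q (PowerSeries.C a * PowerSeries.X ^ n * (pochX s n)⁻¹)
      = PowerSeries.C (a * q ^ n) * PowerSeries.X ^ n * (pochX (s + 1) n)⁻¹ := by
  rw [map_mul, map_mul, rescale_pochX_inv]
  congr 1
  have hC : rescale q (PowerSeries.C a) = PowerSeries.C a := by
    ext m
    simp only [coeff_rescale, PowerSeries.coeff_C]
    split_ifs with h
    · rw [h, pow_zero, one_mul]
    · rw [mul_zero]
  rw [hC, map_pow, rescale_X, mul_pow, ← map_pow, ← mul_assoc, ← map_mul]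

lemma scalar (m : ℕ) : c (m + 1) + c m * q ^ m = c (m + 1) * q ^ (m + 1) := by
  have hp : poch q (m + 1) = poch q m * (1 - q ^ (m + 1)) := by
    unfold poch
    rw [Finset.prod_range_succ, ← pow_succ']
  have hch : (m + 1).choose 2 = m.choose 2 + m := by
    rw [Nat.choose_succ_succ' m 1, Nat.choose_one_right]
    norm_num
    omega
  have h1 : poch q m ≠ 0 := poch_ne_zero m
  have h2 : (1 : K) - q ^ (m + 1) ≠ 0 := fun h => q_pow_ne_one m (sub_eq_zero.mp h).symm
  unfold c
  rw [hp, hch]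
  field_simp
  ring
/-- `J(x) + x/(1-xq)·J(xq) = H(xq)`. -/
theorem stmt1 :
    J + PowerSeries.X * (1 - PowerSeries.C q * PowerSeries.X)⁻¹ * rescale q J
      = rescale q H := by
  have hX1 : (1 : PowerSeries K) - PowerSeries.C q * PowerSeries.X = pochX 1 1 := by
    simp [pochX]
  have hJq : rescale q (S fun n => PowerSeries.C (c n) * PowerSeries.X ^ n * (pochX 1 n)⁻¹)
      = S fun n => PowerSeries.C (c n * q ^ n) * PowerSeries.X ^ n * (pochX 2 n)⁻¹ := by
    rw [rescale_S]
    exact S_congr fun n => rescale_term (c n) 1 n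
  have hHq : rescale q (S fun n => PowerSeries.C (c n) * PowerSeries.X ^ n * (pochX 0 n)⁻¹)
      = S fun n => PowerSeries.C (c n * q ^ n) * PowerSeries.X ^ n * (pochX 1 n)⁻¹ := by
    rw [rescale_S]
    exact S_congr fun n => rescale_term (c n) 0 n
  have hmid : PowerSeries.X * (pochX 1 1)⁻¹
        * S (fun n => PowerSeries.C (c n * q ^ n) * PowerSeries.X ^ n * (pochX 2 n)⁻¹)
      = S fun n =>
          PowerSeries.C (c n * q ^ n) * PowerSeries.X ^ (n + 1) * (pochX 1 (n + 1))⁻¹ := by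
    rw [mul_S _ _ fun n m h => coeff_term _ _ h]
    refine S_congr fun n => ?_
    rw [pochX_succ 1 n, PowerSeries.mul_inv_rev, pow_one, hX1]
    ring
  have hshift : (S fun n =>
        PowerSeries.C (c n * q ^ n) * PowerSeries.X ^ (n + 1) * (pochX 1 (n + 1))⁻¹)
      = S fun n => Nat.rec 0 (fun m _ =>
          PowerSeries.C (c m * q ^ m) * PowerSeries.X ^ (m + 1) * (pochX 1 (m + 1))⁻¹) n :=
    S_shift _ fun n m h => coeff_term _ _ (by omega)
  rw [J_eq, H_eq, hJq, hHq, hX1, hmid, hshift, S_add]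
  refine S_congr fun n => ?_
  cases n with
  | zero => simp
  | succ m =>
    show PowerSeries.C (c (m + 1)) * PowerSeries.X ^ (m + 1) * (pochX 1 (m + 1))⁻¹
        + PowerSeries.C (c m * q ^ m) * PowerSeries.X ^ (m + 1) * (pochX 1 (m + 1))⁻¹
      = PowerSeries.C (c (m + 1) * q ^ (m + 1)) * PowerSeries.X ^ (m + 1)
          * (pochX 1 (m + 1))⁻¹
    rw [← scalar m, map_add, add_mul, add_mul]

end FC
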